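/- Under the assumptions of the period-2 problem with state s=1, the set of maximizers of p' ↦ H·𝟙{p' ≥ 1/2} - c(p' - p) contains p itself when p ≥ 1/2 or p < 1/2 - Δ, and contains 1/2 when 1/2 - Δ < p < 1/2; moreover any maximizer p' satisfies |p' - 1/2| ≤ |p - 1/2|. -/
import Mathlib


/-- Maximizers of the period-2 objective in state `s = 1`, and the
polarization-pull property of any maximizer. -/
theorem period2_maximizers
    (c : ℝ → ℝ) (H Δ : ℝ)
    (hc0 : c 0 = 0)
    (hceven : ∀ x, c (-x) = c x)
    (hcmono : StrictMonoOn c (Set.Ici (0 : ℝ)))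
    (hcconv : StrictConvexOn ℝ Set.univ c)
    (hccont : Continuous c)
    (hH : 0 < H) (hΔ : 0 < Δ) (hcΔ : c Δ = H)
    (p : ℝ) (hp : p ∈ Set.Icc (0 : ℝ) 1) :
    ((1 / 2 ≤ p ∨ p < 1 / 2 - Δ →
        IsMaxOn (fun p' => (if (1 : ℝ) / 2 ≤ p' then H else 0) - c (p' - p))
          (Set.Icc (0 : ℝ) 1) p) ∧
     (1 / 2 - Δ < p → p < 1 / 2 →
        IsMaxOn (fun p' => (if (1 : ℝ) / 2 ≤ p' then H else 0) - c (p' - p))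
          (Set.Icc (0 : ℝ) 1) (1 / 2)) ∧
     (∀ p' ∈ Set.Icc (0 : ℝ) 1,
        IsMaxOn (fun q => (if (1 : ℝ) / 2 ≤ q then H else 0) - c (q - p))
          (Set.Icc (0 : ℝ) 1) p' →
        |p' - 1 / 2| ≤ |p - 1 / 2|)) := by
  have habs : ∀ x : ℝ, c x = c |x| := by
    intro x
    rcases abs_choice x with h | h
    · rw [h]
    · rw [h, hceven]
  have hmono := hcmono.monotoneOn
  have hnn : ∀ x : ℝ, 0 ≤ c x := by
    intro x
    rw [habs x, ← hc0]
    exact hmono (by simp) (Set.mem_Ici.mpr (abs_nonneg x)) (abs_nonneg x)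
  have hpos : ∀ x : ℝ, x ≠ 0 → 0 < c x := by
    intro x hx
    rw [habs x, ← hc0]
    exact hcmono (by simp) (Set.mem_Ici.mpr (abs_nonneg x)) (abs_pos.mpr hx)
  refine ⟨?_, ?_, ?_⟩
  · rintro (hge | hlt) <;> rw [isMaxOn_iff] <;> intro x hx <;>
      obtain ⟨hx0, hx1⟩ := hx <;>
      show (if (1:ℝ)/2 ≤ x then H else 0) - c (x - p) ≤
        (if (1:ℝ)/2 ≤ p then H else 0) - c (p - p)
    · rw [sub_self, hc0, if_pos hge, sub_zero]
      split_ifs with h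
      · linarith [hnn (x - p)]
      · linarith [hnn (x - p)]
    · rw [sub_self, hc0, if_neg (show ¬((1:ℝ)/2 ≤ p) by linarith), sub_zero]
      split_ifs with h
      · have hgt : c Δ < c (x - p) :=
          hcmono (Set.mem_Ici.mpr hΔ.le) (Set.mem_Ici.mpr (by linarith)) (by linarith)
        linarith
      · linarith [hnn (x - p)]
  · intro hp1 hp2
    rw [isMaxOn_iff]
    intro x hx
    obtain ⟨hx0, hx1⟩ := hx
    show (if (1:ℝ)/2 ≤ x then H else 0) - c (x - p) ≤
      (if (1:ℝ)/2 ≤ (1:ℝ)/2 then H else 0) - c ((1:ℝ)/2 - p)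
    rw [if_pos (le_refl _)]
    have hclt : c (1 / 2 - p) < H := by
      rw [← hcΔ]
      exact hcmono (Set.mem_Ici.mpr (by linarith)) (Set.mem_Ici.mpr hΔ.le) (by linarith)
    split_ifs with h
    · have : c (1 / 2 - p) ≤ c (x - p) :=
        hmono (Set.mem_Ici.mpr (by linarith)) (Set.mem_Ici.mpr (by linarith)) (by linarith)
      linarith
    · linarith [hnn (x - p)]
  · intro p' hp' hmax
    obtain ⟨hq0, hq1⟩ := hp'
    have h0 : (if (1:ℝ)/2 ≤ p then H else 0) - c (p - p) ≤
        (if (1:ℝ)/2 ≤ p' then H else 0) - c (p' - p) := hmax hp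
    rw [sub_self, hc0, sub_zero] at h0
    rcases le_or_gt (1 / 2 : ℝ) p with hple | hplt
    · rw [if_pos hple] at h0
      have hind : (1 : ℝ) / 2 ≤ p' := by
        by_contra hcon
        rw [if_neg hcon] at h0
        linarith [hnn (p' - p)]
      rw [if_pos hind] at h0
      have hz : p' - p = 0 := by
        by_contra hne
        linarith [hpos _ hne]
      have : p' = p := by linarith
      rw [this]
    · rw [if_neg (by linarith)] at h0
      rcases le_or_gt (1 / 2 : ℝ) p' with hge | hlt
      · have h2 : (if (1:ℝ)/2 ≤ (1:ℝ)/2 then H else 0) - c ((1:ℝ)/2 - p) ≤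
            (if (1:ℝ)/2 ≤ p' then H else 0) - c (p' - p) :=
          hmax (Set.mem_Icc.mpr ⟨by norm_num, by norm_num⟩)
        rw [if_pos (le_refl _), if_pos hge] at h2
        have hle : p' ≤ 1 / 2 := by
          by_contra hcon
          push_neg at hcon
          have : c (1 / 2 - p) < c (p' - p) :=
            hcmono (Set.mem_Ici.mpr (by linarith)) (Set.mem_Ici.mpr (by linarith))
              (by linarith)
          linarith
        have : p' = 1 / 2 := le_antisymm hle hge
        rw [this, sub_self, abs_zero]
        exact abs_nonneg _
      · rw [if_neg (by linarith)] at h0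
        have hz : p' - p = 0 := by
          by_contra hne
          linarith [hpos _ hne]
        have : p' = p := by linarith
        rw [this]
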